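/- arXiv:1910.05454 — 2 statements merged into one kernel-verified Lean document; each statement's English description precedes it below -/
import Mathlib

section
/- For every matrix X in SL₂(ℤₚ), the centralizer of X in SL₂(ℤₚ), namely the set C(X) = {Y ∈ SL₂(ℤₚ) : Y·X·Y⁻¹ = X}, is an infinite set. -/
open Matrix Polynomial

open Matrix Polynomial

theorem hensel_aux (p : ℕ) [Fact p.Prime] (t : ℤ_[p]) (n : ℕ) :
    ∃ a : ℤ_[p], a ^ 2 + ((p : ℤ_[p]) ^ (n + 3) * t) * a + (((p : ℤ_[p]) ^ (n + 3)) ^ 2 - 1) = 0 := by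
  set c : ℤ_[p] := (p : ℤ_[p]) ^ (n + 3) with hc
  set F : Polynomial ℤ_[p] := X ^ 2 + C (c * t) * X + C (c ^ 2 - 1) with hF
  have hp2 : (2 : ℝ) ≤ p := by exact_mod_cast (Fact.out : p.Prime).two_le
  have heval1 : F.eval 1 = c * t + c ^ 2 := by simp [hF]; ring
  have hderiv : F.derivative.eval 1 = 2 + c * t := by
    simp [hF, Polynomial.derivative_add, Polynomial.derivative_pow]; try ring
  have hpow : (8:ℝ) ≤ (p:ℝ) ^ (n+3) := by
    calc (8:ℝ) = 2 ^ 3 := by norm_num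
    _ ≤ (2:ℝ) ^ (n+3) := pow_le_pow_right₀ (by norm_num) (by omega)
    _ ≤ (p:ℝ) ^ (n+3) := pow_le_pow_left₀ (by norm_num) hp2 _
  have hcsmall : ‖c‖ ≤ 1 / 8 := by
    rw [hc, PadicInt.norm_p_pow]
    rw [_root_.zpow_neg, zpow_natCast, inv_le_comm₀ (by positivity) (by norm_num)]
    simpa using hpow
  have h2 : (1:ℝ)/2 ≤ ‖(2 : ℤ_[p])‖ := by
    rcases eq_or_ne p 2 with hp | hp
    · subst hp
      have h : (2 : ℤ_[2]) = ((2:ℕ) : ℤ_[2]) := by norm_num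
      rw [h]
      have := @PadicInt.norm_p 2 _
      norm_num at this ⊢
      rw [this]
    · have h1 : ‖((2:ℤ) : ℤ_[p])‖ = 1 := by
        rcases lt_or_eq_of_le (PadicInt.norm_le_one ((2:ℤ) : ℤ_[p])) with h | h
        · exfalso
          rw [PadicInt.norm_int_lt_one_iff_dvd] at h
          have : p ∣ 2 := by exact_mod_cast h
          exact hp ((Nat.prime_dvd_prime_iff_eq Fact.out Nat.prime_two).mp this)
        · exact h
      have h2 : ((2:ℤ) : ℤ_[p]) = (2 : ℤ_[p]) := by push_cast; ring
      rw [h2] at h1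
      rw [h1]; norm_num
  have hct : ‖c * t‖ < ‖(2 : ℤ_[p])‖ := by
    calc ‖c * t‖ ≤ ‖c‖ := by
          calc ‖c * t‖ = ‖c‖ * ‖t‖ := norm_mul _ _
          _ ≤ ‖c‖ * 1 := mul_le_mul_of_nonneg_left (PadicInt.norm_le_one t) (norm_nonneg c)
          _ = ‖c‖ := mul_one _
    _ ≤ 1/8 := hcsmall
    _ < 1/2 := by norm_num
    _ ≤ ‖(2 : ℤ_[p])‖ := h2
  have hd : ‖F.derivative.eval 1‖ = ‖(2 : ℤ_[p])‖ := by
    rw [hderiv, add_comm, PadicInt.norm_add_eq_max_of_ne (ne_of_lt hct)]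
    exact max_eq_right hct.le
  have hnorm : ‖F.eval 1‖ < ‖F.derivative.eval 1‖ ^ 2 := by
    rw [hd, heval1]
    have he : ‖c * t + c ^ 2‖ ≤ ‖c‖ := by
      refine (PadicInt.nonarchimedean _ _).trans ?_
      apply max_le
      · calc ‖c * t‖ = ‖c‖ * ‖t‖ := norm_mul _ _
          _ ≤ ‖c‖ * 1 := mul_le_mul_of_nonneg_left (PadicInt.norm_le_one t) (norm_nonneg c)
          _ = ‖c‖ := mul_one _
      · calc ‖c ^ 2‖ = ‖c‖ * ‖c‖ := by rw [sq]; exact norm_mul _ _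
          _ ≤ ‖c‖ * 1 := mul_le_mul_of_nonneg_left (PadicInt.norm_le_one c) (norm_nonneg c)
          _ = ‖c‖ := mul_one _
    calc ‖c * t + c ^ 2‖ ≤ 1/8 := he.trans hcsmall
    _ < (1/2) ^ 2 := by norm_num
    _ ≤ ‖(2 : ℤ_[p])‖ ^ 2 := by
        apply pow_le_pow_left₀ (by norm_num) h2
  obtain ⟨z, hz, -⟩ := hensels_lemma hnorm
  refine ⟨z, ?_⟩
  rw [hF] at hz
  simpa using hz


/-- For every matrix `X` in `SL₂(ℤₚ)`, the centralizer of `X` in `SL₂(ℤₚ)`,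
namely `{Y ∈ SL₂(ℤₚ) | Y * X * Y⁻¹ = X}`, is an infinite set. -/
theorem centralizer_infinite_in_SL2_padic (p : ℕ) [Fact p.Prime]
    (X : Matrix.SpecialLinearGroup (Fin 2) ℤ_[p]) :
    {Y : Matrix.SpecialLinearGroup (Fin 2) ℤ_[p] | Y * X * Y⁻¹ = X}.Infinite := by
  set A : Matrix (Fin 2) (Fin 2) ℤ_[p] := (X : Matrix (Fin 2) (Fin 2) ℤ_[p]) with hA
  have key : ∀ Y : Matrix.SpecialLinearGroup (Fin 2) ℤ_[p],
      (Y : Matrix (Fin 2) (Fin 2) ℤ_[p]) * A = A * (Y : Matrix (Fin 2) (Fin 2) ℤ_[p]) →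
      Y * X * Y⁻¹ = X := by
    intro Y h
    have h2 : Y * X = X * Y := Subtype.ext h
    rw [h2, mul_inv_cancel_right]
  have hdet : A 0 0 * A 1 1 - A 0 1 * A 1 0 = 1 := by
    have := X.prop
    rwa [Matrix.det_fin_two] at this
  by_cases hs : A 0 1 = 0 ∧ A 1 0 = 0 ∧ A 0 0 = A 1 1
  · -- scalar case
    have hAs : A = A 0 0 • (1 : Matrix (Fin 2) (Fin 2) ℤ_[p]) := by
      ext i j
      fin_cases i <;> fin_cases j <;>
        simp [Matrix.one_apply, hs.1, hs.2.1, hs.2.2]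
    apply Set.infinite_of_injective_forall_mem
      (f := fun n : ℕ => (⟨!![1, (n : ℤ_[p]); 0, 1], by simp [Matrix.det_fin_two_of]⟩ :
        Matrix.SpecialLinearGroup (Fin 2) ℤ_[p]))
    · intro m n hmn
      have h2 : (⟨!![1, (m : ℤ_[p]); 0, 1], by simp [Matrix.det_fin_two_of]⟩ :
          Matrix.SpecialLinearGroup (Fin 2) ℤ_[p]).val 0 1
          = (⟨!![1, (n : ℤ_[p]); 0, 1], by simp [Matrix.det_fin_two_of]⟩ :
          Matrix.SpecialLinearGroup (Fin 2) ℤ_[p]).val 0 1 := by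
        simp only at hmn; rw [hmn]
      simp at h2
      exact_mod_cast h2
    · intro n
      apply key
      rw [hAs]
      simp
  · -- non-scalar case
    set t : ℤ_[p] := A 0 0 + A 1 1 with ht
    have hens : ∀ n : ℕ, ∃ a : ℤ_[p],
        a ^ 2 + ((p : ℤ_[p]) ^ (n + 3) * t) * a + (((p : ℤ_[p]) ^ (n + 3)) ^ 2 - 1) = 0 :=
      fun n => hensel_aux p t n
    choose a ha using hens
    set c : ℕ → ℤ_[p] := fun n => (p : ℤ_[p]) ^ (n + 3) with hcdef
    have hdetM : ∀ n : ℕ, (a n • (1 : Matrix (Fin 2) (Fin 2) ℤ_[p]) + c n • A).det = 1 := by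
      intro n
      rw [Matrix.det_fin_two]
      simp only [Matrix.add_apply, Matrix.smul_apply, Matrix.one_apply, smul_eq_mul]
      norm_num
      linear_combination ha n + (c n) ^ 2 * hdet
    apply Set.infinite_of_injective_forall_mem
      (f := fun n : ℕ => (⟨a n • (1 : Matrix (Fin 2) (Fin 2) ℤ_[p]) + c n • A, hdetM n⟩ :
        Matrix.SpecialLinearGroup (Fin 2) ℤ_[p]))
    · intro m n hmn
      have hval : a m • (1 : Matrix (Fin 2) (Fin 2) ℤ_[p]) + c m • A
          = a n • (1 : Matrix (Fin 2) (Fin 2) ℤ_[p]) + c n • A := congrArg Subtype.val hmn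
      have e01 : c m * A 0 1 = c n * A 0 1 := by
        have := congrArg (fun M => M 0 1) hval
        simpa [Matrix.one_apply] using this
      have e10 : c m * A 1 0 = c n * A 1 0 := by
        have := congrArg (fun M => M 1 0) hval
        simpa [Matrix.one_apply] using this
      have e00 : a m + c m * A 0 0 = a n + c n * A 0 0 := by
        have := congrArg (fun M => M 0 0) hval
        simpa [Matrix.one_apply] using this
      have e11 : a m + c m * A 1 1 = a n + c n * A 1 1 := by
        have := congrArg (fun M => M 1 1) hval
        simpa [Matrix.one_apply] using this
      have hc : c m = c n := by
        by_cases h01 : A 0 1 = 0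
        · by_cases h10 : A 1 0 = 0
          · have hne : A 0 0 - A 1 1 ≠ 0 := by
              intro h
              exact hs ⟨h01, h10, by linear_combination h⟩
            have : (c m - c n) * (A 0 0 - A 1 1) = 0 := by linear_combination e00 - e11
            rcases mul_eq_zero.mp this with h | h
            · linear_combination h
            · exact absurd h hne
          · have : (c m - c n) * A 1 0 = 0 := by linear_combination e10
            rcases mul_eq_zero.mp this with h | h
            · linear_combination h
            · exact absurd h h10
        · have : (c m - c n) * A 0 1 = 0 := by linear_combination e01
          rcases mul_eq_zero.mp this with h | h
          · linear_combination h
          · exact absurd h h01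
      have hp0 : (0:ℝ) < p := by exact_mod_cast (Fact.out : p.Prime).pos
      have hp1 : (p:ℝ) ≠ 1 := by
        exact_mod_cast (Fact.out : p.Prime).ne_one
      have hnn := congrArg norm hc
      simp only [hcdef, PadicInt.norm_p_pow] at hnn
      have h := zpow_right_injective₀ hp0 hp1 hnn
      omega
    · intro n
      apply key
      show (a n • 1 + c n • A) * A = A * (a n • 1 + c n • A)
      rw [add_mul, mul_add, smul_mul_assoc, smul_mul_assoc, mul_smul_comm, mul_smul_comm,
        one_mul, mul_one]
end

section
/- Let p be a prime with p ≥ 5. Then the group GL₂(ℤₚ) contains no element of order p. -/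
open Polynomial

lemma cyclo_comp_coeff (p : ℕ) [Fact p.Prime] (k : ℕ) :
    ((cyclotomic p ℤ_[p]).comp (X + C 1)).coeff k = (p.choose (k+1) : ℤ_[p]) := by
  have h : ((cyclotomic p ℤ_[p]).comp (X + C 1)) * X = (X + C 1) ^ p - 1 := by
    have := congrArg (fun f : ℤ_[p][X] => f.comp (X + C 1))
      (cyclotomic_prime_mul_X_sub_one ℤ_[p] p)
    simpa [mul_comp, sub_comp, pow_comp] using this
  have := congrArg (fun f : ℤ_[p][X] => f.coeff (k+1)) h
  simp only [coeff_mul_X] at this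
  rw [this]
  have hk : k + 1 ≠ 0 := Nat.succ_ne_zero k
  simp [coeff_sub, coeff_X_add_one_pow, coeff_one, hk]

lemma cyclo_int_irred (p : ℕ) [Fact p.Prime] : Irreducible (cyclotomic p ℤ_[p]) := by
  have hp := (Fact.out : p.Prime)
  set f : ℤ_[p][X] := (cyclotomic p ℤ_[p]).comp (X + C 1) with hf
  have hmono : f.Monic := (cyclotomic.monic p ℤ_[p]).comp_X_add_C 1
  have hdeg : f.natDegree = p - 1 := by
    rw [hf, natDegree_comp, natDegree_cyclotomic, Nat.totient_prime hp, natDegree_X_add_C, mul_one]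
  have hP : Ideal.span {(p : ℤ_[p])} = IsLocalRing.maximalIdeal ℤ_[p] :=
    (PadicInt.maximalIdeal_eq_span_p).symm
  have hEis : f.IsEisensteinAt (Ideal.span {(p : ℤ_[p])}) := by
    apply hmono.isEisensteinAt_of_mem_of_notMem
    · rw [hP]; exact (IsLocalRing.maximalIdeal.isMaximal ℤ_[p]).ne_top
    · intro n hn
      rw [cyclo_comp_coeff, Ideal.mem_span_singleton]
      obtain ⟨c, hc⟩ := hp.dvd_choose_self (Nat.succ_ne_zero n)
        (by omega : n + 1 < p)
      exact ⟨(c : ℤ_[p]), by rw [← Nat.cast_mul, ← hc]⟩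
    · rw [cyclo_comp_coeff, Nat.choose_one_right, Ideal.span_singleton_pow,
        Ideal.mem_span_singleton]
      intro ⟨c, hc⟩
      have hpne : (p : ℤ_[p]) ≠ 0 := Nat.cast_ne_zero.2 hp.ne_zero
      have h1 : (p:ℤ_[p]) * 1 = (p:ℤ_[p]) * ((p:ℤ_[p]) * c) := by linear_combination hc
      have := mul_left_cancel₀ hpne h1
      exact PadicInt.prime_p.not_unit (IsUnit.of_mul_eq_one _ this.symm)
  have hirr_f : Irreducible f :=
    hEis.irreducible (by rw [hP]; exact (IsLocalRing.maximalIdeal.isMaximal ℤ_[p]).isPrime)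
      hmono.isPrimitive (by rw [hdeg]; have := hp.two_le; omega)
  have he : (Polynomial.algEquivAevalXAddC (1:ℤ_[p])) (cyclotomic p ℤ_[p]) = f := by
    simp [algEquivAevalXAddC, ← comp_eq_aeval, hf]
  rw [← MulEquiv.irreducible_iff (Polynomial.algEquivAevalXAddC (1:ℤ_[p])).toMulEquiv]
  show Irreducible ((Polynomial.algEquivAevalXAddC (1:ℤ_[p])) (cyclotomic p ℤ_[p]))
  rw [he]; exact hirr_f

lemma cyclo_irred (p : ℕ) [Fact p.Prime] : Irreducible (cyclotomic p ℚ_[p]) := by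
  have h := (cyclotomic.monic p ℤ_[p]).irreducible_iff_irreducible_map_fraction_map
    (K := ℚ_[p]) |>.mp (cyclo_int_irred p)
  rwa [map_cyclotomic] at h

/-- Let `p ≥ 5` be a prime. Then `GL₂(ℤₚ)` contains no element of order `p`,
i.e. there is no `g ∈ GL₂(ℤₚ)` with `g ≠ 1` and `g^p = 1`. -/
theorem GL2_padic_no_element_of_order_p (p : ℕ) [Fact p.Prime] (hp : 5 ≤ p) :
    ¬ ∃ g : GL (Fin 2) ℤ_[p], g ≠ 1 ∧ g ^ p = 1 := by
  have hprime : p.Prime := Fact.out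
  rintro ⟨g, hg1, hgp⟩
  set φ : ℤ_[p] →+* ℚ_[p] := PadicInt.Coe.ringHom
  set M : Matrix (Fin 2) (Fin 2) ℚ_[p] := φ.mapMatrix (g : Matrix (Fin 2) (Fin 2) ℤ_[p]) with hM
  have hMp : M ^ p = 1 := by
    have := congrArg Units.val hgp
    rw [Units.val_pow_eq_pow_val, Units.val_one] at this
    rw [hM, ← map_pow, this, map_one]
  have haev : aeval M ((X : ℚ_[p][X]) ^ p - 1) = 0 := by
    simp [map_sub, map_pow, aeval_X, hMp]
  have hint : IsIntegral ℚ_[p] M := IsIntegral.of_finite ℚ_[p] M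
  set m := minpoly ℚ_[p] M with hm
  have hm0 : m ≠ 0 := minpoly.ne_zero hint
  have hdvd : m ∣ (X : ℚ_[p][X]) ^ p - 1 := minpoly.dvd _ _ haev
  have hdeg : m.natDegree ≤ 2 := by
    have h1 := Polynomial.natDegree_le_of_dvd (Matrix.minpoly_dvd_charpoly M)
      (Matrix.charpoly_monic _).ne_zero
    rwa [Matrix.charpoly_natDegree_eq_dim, Fintype.card_fin] at h1
  have hfac : (X : ℚ_[p][X]) ^ p - 1 = cyclotomic p ℚ_[p] * (X - 1) :=
    (cyclotomic_prime_mul_X_sub_one ℚ_[p] p).symm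
  rw [hfac] at hdvd
  have hndvd : ¬ (cyclotomic p ℚ_[p] ∣ m) := by
    intro h
    have : (cyclotomic p ℚ_[p]).natDegree ≤ m.natDegree :=
      Polynomial.natDegree_le_of_dvd h hm0
    rw [natDegree_cyclotomic, Nat.totient_prime hprime] at this
    omega
  have hcop : IsCoprime (cyclotomic p ℚ_[p]) m :=
    (cyclo_irred p).coprime_iff_not_dvd.2 hndvd
  have h : m ∣ (X : ℚ_[p][X]) - 1 := hcop.symm.dvd_of_dvd_mul_left hdvd
  · obtain ⟨c, hc⟩ := h
    have : aeval M ((X : ℚ_[p][X]) - 1) = 0 := by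
      rw [hc, map_mul, minpoly.aeval, zero_mul]
    have hM1 : M = 1 := by
      have := this
      rw [map_sub, aeval_X, map_one, sub_eq_zero] at this
      exact this
    apply hg1
    have hinj : Function.Injective (φ.mapMatrix : Matrix (Fin 2) (Fin 2) ℤ_[p] →+* _) := by
      intro A B hAB
      ext i j
      exact Subtype.coe_injective (congrFun (congrFun (congrArg Matrix.of.symm hAB) i) j)
    have : (g : Matrix (Fin 2) (Fin 2) ℤ_[p]) = 1 := by
      apply hinj
      rw [← hM, hM1, map_one]
    exact Units.ext this
end
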